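/- The group with presentation ⟨i, τ₁, τ₂ | i² = 1, τ₁ i τ₂ = i, τ₂ i τ₁ = i, τ₁ i τ₁ = τ₂, τ₂ i τ₂ = τ₁⟩ is isomorphic to the free product ℤ/2ℤ * ℤ/3ℤ, via the identification ρ₁ = i·τ₁, which satisfies ρ₁³ = 1. -/

import Mathlib

/-- Relations of the group `𝔊` of elementary transformations of marked boxes,
on generators `i = of 0`, `τ₁ = of 1`, `τ₂ = of 2`. -/
def markedBoxRels : Set (FreeGroup (Fin 3)) :=
  { FreeGroup.of 0 * FreeGroup.of 0,
    FreeGroup.of 1 * FreeGroup.of 0 * FreeGroup.of 2 * (FreeGroup.of 0)⁻¹,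
    FreeGroup.of 2 * FreeGroup.of 0 * FreeGroup.of 1 * (FreeGroup.of 0)⁻¹,
    FreeGroup.of 1 * FreeGroup.of 0 * FreeGroup.of 1 * (FreeGroup.of 2)⁻¹,
    FreeGroup.of 2 * FreeGroup.of 0 * FreeGroup.of 2 * (FreeGroup.of 1)⁻¹ }

/-- A hom from `Multiplicative (ZMod n)` determined by an element of order dividing `n`. -/
noncomputable def zmodHom (n : ℕ) {G : Type*} [Group G] (g : G) (hg : g ^ n = 1) :
    Multiplicative (ZMod n) →* G :=
  AddMonoidHom.toMultiplicativeLeft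
    (ZMod.lift n ⟨zmultiplesHom (Additive G) (Additive.ofMul g), by
      simpa [zmultiplesHom, ← ofMul_pow] using congrArg Additive.ofMul hg⟩)

lemma zmodHom_one (n : ℕ) {G : Type*} [Group G] (g : G) (hg : g ^ n = 1) :
    zmodHom n g hg (Multiplicative.ofAdd 1) = g := by
  have : ((1 : ℤ) : ZMod n) = (1 : ZMod n) := by push_cast; ring
  simp only [zmodHom, AddMonoidHom.coe_toMultiplicativeLeft, Function.comp_apply]
  have h1 : (Multiplicative.toAdd (Multiplicative.ofAdd (1 : ZMod n))) = ((1:ℤ) : ZMod n) := by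
    simpa using this.symm
  rw [h1, ZMod.lift_coe]
  simp [zmultiplesHom]

lemma zmodHom_ext {n : ℕ} [NeZero n] {G : Type*} [Monoid G]
    {f g : Multiplicative (ZMod n) →* G}
    (h : f (Multiplicative.ofAdd 1) = g (Multiplicative.ofAdd 1)) : f = g := by
  refine MonoidHom.ext fun x => ?_
  have hx : x = (Multiplicative.ofAdd (1 : ZMod n)) ^ ZMod.val (Multiplicative.toAdd x) := by
    rw [← ofAdd_nsmul]
    simp [nsmul_eq_mul, ZMod.natCast_val, ZMod.cast_id]
  rw [hx, map_pow, map_pow, h]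

theorem markedBoxGroup_iso_coprod :
    ((PresentedGroup.of (rels := markedBoxRels) 0 * PresentedGroup.of 1) ^ 3 = 1) ∧
    Nonempty (PresentedGroup markedBoxRels ≃*
      Monoid.Coprod (Multiplicative (ZMod 2)) (Multiplicative (ZMod 3))) := by
  set G := PresentedGroup markedBoxRels
  -- relation facts in G
  have hrel : ∀ w ∈ markedBoxRels, PresentedGroup.mk markedBoxRels w = 1 := fun w hw =>
    (QuotientGroup.eq_one_iff _).2 (Subgroup.subset_normalClosure hw)
  set i : G := PresentedGroup.of 0 with hidef
  set t1 : G := PresentedGroup.of 1 with ht1def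
  set t2 : G := PresentedGroup.of 2 with ht2def
  have h1 : i * i = 1 := by
    simpa [hidef, ht1def, ht2def, PresentedGroup.of] using hrel _ (by simp [markedBoxRels] : FreeGroup.of 0 * FreeGroup.of 0 ∈ markedBoxRels)
  have h2 : t1 * i * t2 * i⁻¹ = 1 := by
    simpa [hidef, ht1def, ht2def, PresentedGroup.of] using hrel _ (show FreeGroup.of 1 * FreeGroup.of 0 * FreeGroup.of 2 * (FreeGroup.of 0)⁻¹ ∈ markedBoxRels by simp [markedBoxRels])
  have h3 : t2 * i * t1 * i⁻¹ = 1 := by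
    simpa [hidef, ht1def, ht2def, PresentedGroup.of] using hrel _ (show FreeGroup.of 2 * FreeGroup.of 0 * FreeGroup.of 1 * (FreeGroup.of 0)⁻¹ ∈ markedBoxRels by simp [markedBoxRels])
  have h4 : t1 * i * t1 * t2⁻¹ = 1 := by
    simpa [hidef, ht1def, ht2def, PresentedGroup.of] using hrel _ (show FreeGroup.of 1 * FreeGroup.of 0 * FreeGroup.of 1 * (FreeGroup.of 2)⁻¹ ∈ markedBoxRels by simp [markedBoxRels])
  have h5 : t2 * i * t2 * t1⁻¹ = 1 := by
    simpa [hidef, ht1def, ht2def, PresentedGroup.of] using hrel _ (show FreeGroup.of 2 * FreeGroup.of 0 * FreeGroup.of 2 * (FreeGroup.of 1)⁻¹ ∈ markedBoxRels by simp [markedBoxRels])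
  have h4' : t1 * i * t1 = t2 := by
    have := mul_eq_one_iff_eq_inv.1 h4; exact this.trans (inv_inv _)
  have h3' : t2 * i * t1 = i := by
    have := mul_eq_one_iff_eq_inv.1 h3; exact this.trans (inv_inv _)
  -- ρ³ = 1
  have hrho : (i * t1) ^ 3 = 1 := by
    have e : (i * t1) ^ 3 = i * (t1 * i * t1) * (i * t1) := by
      rw [pow_succ, pow_two]
      simp [mul_assoc]
    rw [e, h4']
    calc i * t2 * (i * t1) = i * (t2 * i * t1) := by simp [mul_assoc]
      _ = i * i := by rw [h3']
      _ = 1 := h1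
  refine ⟨hrho, ?_⟩
  -- forward hom
  set C := Monoid.Coprod (Multiplicative (ZMod 2)) (Multiplicative (ZMod 3))
  set a : C := Monoid.Coprod.inl (Multiplicative.ofAdd (1 : ZMod 2)) with hadef
  set r : C := Monoid.Coprod.inr (Multiplicative.ofAdd (1 : ZMod 3)) with hrdef
  have ha2 : a * a = 1 := by
    rw [hadef, ← map_mul, ← ofAdd_add, show (1 : ZMod 2) + 1 = 0 from by decide,
      ofAdd_zero, map_one]
  have hr3 : r * (r * r) = 1 := by
    rw [hrdef, ← map_mul, ← map_mul, ← ofAdd_add, ← ofAdd_add,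
      show (1 : ZMod 3) + (1 + 1) = 0 from by decide, ofAdd_zero, map_one]
  have ha' : ∀ x : C, a * (a * x) = x := fun x => by rw [← mul_assoc, ha2, one_mul]
  have hr3' : r * r * r = 1 := by rw [mul_assoc]; exact hr3
  have hr' : ∀ x : C, r * (r * (r * x)) = x := fun x => by
    rw [← mul_assoc, ← mul_assoc, hr3', one_mul]
  set fgen : Fin 3 → C := ![a, a * r, a * r * r] with hf
  have hcond : ∀ w ∈ markedBoxRels, FreeGroup.lift fgen w = 1 := by
    intro w hw
    have hainv : a⁻¹ = a := inv_eq_of_mul_eq_one_left ha2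
    have hrinv : r⁻¹ = r * r := inv_eq_of_mul_eq_one_left hr3'
    simp only [markedBoxRels, Set.mem_insert_iff, Set.mem_singleton_iff] at hw
    rcases hw with rfl | rfl | rfl | rfl | rfl <;>
      simp [hf, hainv, hrinv, mul_inv_rev, mul_assoc, ha', hr', ha2, hr3]
  set φ : G →* C := PresentedGroup.toGroup hcond with hφ
  have hφ0 : φ i = a := PresentedGroup.toGroup.of hcond
  have hφ1 : φ t1 = a * r := PresentedGroup.toGroup.of hcond
  have hφ2 : φ t2 = a * r * r := PresentedGroup.toGroup.of hcond
  -- backward hom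
  set ψ : C →* G := Monoid.Coprod.lift (zmodHom 2 i (by rw [pow_two]; exact h1))
      (zmodHom 3 (i * t1) hrho) with hψ
  have hψa : ψ a = i := by
    rw [hadef, hψ, Monoid.Coprod.lift_apply_inl, zmodHom_one]
  have hψr : ψ r = i * t1 := by
    rw [hrdef, hψ, Monoid.Coprod.lift_apply_inr, zmodHom_one]
  have key : ∀ x, i * (i * x) = x := fun x => by rw [← mul_assoc, h1, one_mul]
  have c1 : ψ.comp φ = MonoidHom.id G := by
    apply PresentedGroup.ext
    intro x
    fin_cases x
    · show ψ (φ i) = i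
      rw [hφ0, hψa]
    · show ψ (φ t1) = t1
      rw [hφ1, map_mul, hψa, hψr, key]
    · show ψ (φ t2) = t2
      rw [hφ2, map_mul, map_mul, hψa, hψr]
      rw [show i * (i * t1) * (i * t1) = t1 * i * t1 by
        rw [← mul_assoc, ← mul_assoc, h1, one_mul, mul_assoc, ← mul_assoc], h4']
  have c2 : φ.comp ψ = MonoidHom.id C := by
    apply Monoid.Coprod.hom_ext
    · apply zmodHom_ext
      simp only [MonoidHom.comp_apply]
      rw [show (Monoid.Coprod.inl (Multiplicative.ofAdd (1 : ZMod 2)) : C) = a from rfl]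
      rw [hψa, hφ0]; rfl
    · apply zmodHom_ext
      simp only [MonoidHom.comp_apply]
      rw [show (Monoid.Coprod.inr (Multiplicative.ofAdd (1 : ZMod 3)) : C) = r from rfl]
      rw [hψr, map_mul, hφ0, hφ1, ha']
      rfl
  exact ⟨MonoidHom.toMulEquiv φ ψ c1 c2⟩
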